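/- arXiv:2402.15953 — 2 statements merged into one kernel-verified Lean document; each statement's English description precedes it below -/
import Mathlib

section
/- Let f, g ∈ ℝ^n and let Π ∈ ℝ^{m×n} be random with Π_{j,i} = s_j(i), where the s_j : [n] → {-1,+1} are i.i.d. draws from a 4-wise independent family. Then Var((1/m)·⟨Πf, Πg⟩) ≤ (2/m)·‖f‖₂²·‖g‖₂². -/
open Finset BigOperators
open scoped Classical

/-- A uniformly random sign function from a 4-wise independent family. -/
def FourWiseIndepSigns {Ω : Type*} [Fintype Ω] {n : ℕ} (μ : Ω → ℝ)
    (s : Ω → Fin n → ℝ) : Prop :=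
  ∀ (k : ℕ), k ≤ 4 → ∀ (x : Fin k → Fin n), Function.Injective x →
    ∀ ε : Fin k → ℝ, (∀ j, ε j = 1 ∨ ε j = -1) →
      (∑ ω, (if ∀ j, s ω (x j) = ε j then μ ω else 0)) = (1/2 : ℝ) ^ k

set_option maxRecDepth 4000

lemma sum_pi_prod {α : Type*} [Fintype α] : ∀ {m : ℕ} (φ : Fin m → α → ℝ),
    ∑ ω : Fin m → α, ∏ j, φ j (ω j) = ∏ j, ∑ a, φ j a := by
  intro m
  induction m with
  | zero => intro φ; simp
  | succ k ih =>
    intro φ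
    rw [← Equiv.sum_comp (Fin.consEquiv (fun _ : Fin (k+1) => α))
      (fun ω => ∏ j, φ j (ω j))]
    rw [Fintype.sum_prod_type]
    simp only [Fin.consEquiv_apply]
    have : ∀ (a : α) (t : Fin k → α),
        ∏ j, φ j ((Fin.cons a t : Fin (k+1) → α) j) = φ 0 a * ∏ j, φ j.succ (t j) := by
      intro a t
      rw [Fin.prod_univ_succ]
      simp [Fin.cons_zero, Fin.cons_succ]
    simp_rw [this]
    rw [Fin.prod_univ_succ]
    rw [← Finset.sum_mul_sum]
    rw [ih (fun j b => φ j.succ b)]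

lemma moment_zero {Ω₀ : Type*} [Fintype Ω₀] (μ₀ : Ω₀ → ℝ) {n : ℕ} (s : Ω₀ → Fin n → ℝ)
    (hsign : ∀ ω i, s ω i = 1 ∨ s ω i = -1) (h4 : FourWiseIndepSigns μ₀ s)
    {k : ℕ} (hk1 : 1 ≤ k) (hk4 : k ≤ 4) (x : Fin k → Fin n) (hx : Function.Injective x) :
    ∑ ω, μ₀ ω * ∏ j, s ω (x j) = 0 := by
  classical
  set sgn : Bool → ℝ := fun b => if b then 1 else -1 with hsgn
  have key : ∀ ω, μ₀ ω * ∏ j, s ω (x j)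
      = ∑ ε : Fin k → Bool,
          (if ∀ j, s ω (x j) = sgn (ε j) then μ₀ ω else 0) * ∏ j, sgn (ε j) := by
    intro ω
    set ε₀ : Fin k → Bool := fun j => if s ω (x j) = 1 then true else false with hε₀
    have hsε : ∀ j, s ω (x j) = sgn (ε₀ j) := by
      intro j; rcases hsign ω (x j) with h | h <;> norm_num [hε₀, hsgn, h]
    rw [Finset.sum_eq_single ε₀]
    · rw [if_pos hsε]
      congr 1
      exact Finset.prod_congr rfl (fun j _ => hsε j)
    · intro ε _ hne
      rw [if_neg, zero_mul]
      intro hcon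
      apply hne; funext j
      have h1 := hcon j
      have h2 := hsε j
      rw [h1] at h2
      cases hb : ε j <;> cases hb0 : ε₀ j <;> rw [hb, hb0] at h2 <;>
        first
          | rfl
          | (exfalso; norm_num [hsgn] at h2)
    · intro h; exact absurd (Finset.mem_univ _) h
  calc ∑ ω, μ₀ ω * ∏ j, s ω (x j)
      = ∑ ω, ∑ ε : Fin k → Bool,
          (if ∀ j, s ω (x j) = sgn (ε j) then μ₀ ω else 0) * ∏ j, sgn (ε j) :=
        Finset.sum_congr rfl fun ω _ => key ω
    _ = ∑ ε : Fin k → Bool,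
          (∑ ω, if ∀ j, s ω (x j) = sgn (ε j) then μ₀ ω else 0) * ∏ j, sgn (ε j) := by
        rw [Finset.sum_comm]
        exact Finset.sum_congr rfl fun ε _ => (Finset.sum_mul _ _ _).symm
    _ = ∑ ε : Fin k → Bool, (1/2:ℝ)^k * ∏ j, sgn (ε j) := by
        refine Finset.sum_congr rfl fun ε _ => ?_
        rw [h4 k hk4 x hx (fun j => sgn (ε j)) (fun j => by
          cases h : ε j
          · right; norm_num [hsgn, h]
          · left; norm_num [hsgn, h])]
    _ = (1/2:ℝ)^k * ∑ ε : Fin k → Bool, ∏ j, sgn (ε j) := by rw [← Finset.mul_sum]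
    _ = 0 := by
        rw [sum_pi_prod (fun _ b => sgn b)]
        have : ∑ b : Bool, sgn b = 0 := by simp [hsgn]
        rw [Finset.prod_congr rfl (fun j _ => this), Finset.prod_const,
          zero_pow (by simpa using Nat.one_le_iff_ne_zero.mp hk1)]
        ring

section M4
variable {Ω₀ : Type*} [Fintype Ω₀] (μ₀ : Ω₀ → ℝ) {n : ℕ} (s : Ω₀ → Fin n → ℝ)

lemma pair_moment (hμsum : ∑ ω, μ₀ ω = 1)
    (hsign : ∀ ω i, s ω i = 1 ∨ s ω i = -1) (h4 : FourWiseIndepSigns μ₀ s)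
    (i k : Fin n) :
    ∑ ω, μ₀ ω * (s ω i * s ω k) = if i = k then 1 else 0 := by
  have hsq : ∀ ω a, s ω a * s ω a = 1 := by
    intro ω a; rcases hsign ω a with h | h <;> rw [h] <;> norm_num
  by_cases h : i = k
  · subst h
    rw [if_pos rfl]
    calc ∑ ω, μ₀ ω * (s ω i * s ω i) = ∑ ω, μ₀ ω := by
          exact Finset.sum_congr rfl fun ω _ => by rw [hsq, mul_one]
      _ = 1 := hμsum
  · rw [if_neg h]
    have hinj : Function.Injective ![i, k] := by
      intro a b hab
      fin_cases a <;> fin_cases b <;> simp_all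
    have := moment_zero μ₀ s hsign h4 (k := 2) (by norm_num) (by norm_num) ![i, k] hinj
    simpa [Fin.prod_univ_two] using this

lemma quad_moment (hsign : ∀ ω i, s ω i = 1 ∨ s ω i = -1) (h4 : FourWiseIndepSigns μ₀ s)
    {i k p q : Fin n} (hik : i ≠ k) (hip : i ≠ p) (hiq : i ≠ q)
    (hkp : k ≠ p) (hkq : k ≠ q) (hpq : p ≠ q) :
    ∑ ω, μ₀ ω * (s ω i * s ω k * s ω p * s ω q) = 0 := by
  have hinj : Function.Injective ![i, k, p, q] := by
    intro a b hab
    fin_cases a <;> fin_cases b <;> simp_all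
  have := moment_zero μ₀ s hsign h4 (k := 4) (by norm_num) (by norm_num) ![i, k, p, q] hinj
  simpa [Fin.prod_univ_four, mul_assoc] using this

lemma M4_eq (hμsum : ∑ ω, μ₀ ω = 1)
    (hsign : ∀ ω i, s ω i = 1 ∨ s ω i = -1) (h4 : FourWiseIndepSigns μ₀ s)
    (i k p q : Fin n) :
    ∑ ω, μ₀ ω * (s ω i * s ω k * s ω p * s ω q)
      = (if i = k ∧ p = q then 1 else 0) + (if i = p ∧ k = q then 1 else 0)
        + (if i = q ∧ k = p then 1 else 0)
        - 2 * (if i = k ∧ k = p ∧ p = q then 1 else 0) := by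
  have hsq : ∀ ω a, s ω a * s ω a = 1 := by
    intro ω a; rcases hsign ω a with h | h <;> rw [h] <;> norm_num
  have hpair := pair_moment μ₀ s hμsum hsign h4
  by_cases h1 : i = k
  · subst h1
    by_cases h2 : p = q
    · subst h2
      have hL : ∑ ω, μ₀ ω * (s ω i * s ω i * s ω p * s ω p) = 1 := by
        calc ∑ ω, μ₀ ω * (s ω i * s ω i * s ω p * s ω p) = ∑ ω, μ₀ ω := by
              refine Finset.sum_congr rfl fun ω _ => ?_
              rw [show s ω i * s ω i * s ω p * s ω p
                  = (s ω i * s ω i) * (s ω p * s ω p) by ring, hsq, hsq, mul_one, mul_one]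
          _ = 1 := hμsum
      rw [hL]
      by_cases h3 : i = p <;> simp [h3] <;> norm_num
    · have hL : ∑ ω, μ₀ ω * (s ω i * s ω i * s ω p * s ω q) = 0 := by
        calc ∑ ω, μ₀ ω * (s ω i * s ω i * s ω p * s ω q)
            = ∑ ω, μ₀ ω * (s ω p * s ω q) := by
              refine Finset.sum_congr rfl fun ω _ => ?_
              rw [show s ω i * s ω i * s ω p * s ω q
                  = (s ω i * s ω i) * (s ω p * s ω q) by ring, hsq, one_mul]
          _ = 0 := by rw [hpair p q, if_neg h2]
      rw [hL]
      have c2 : ¬(i = p ∧ i = q) := fun ⟨a, b⟩ => h2 (a.symm.trans b)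
      have c3 : ¬(i = q ∧ i = p) := fun ⟨a, b⟩ => h2 (b.symm.trans a)
      have c4 : ¬(i = i ∧ i = p ∧ p = q) := fun ⟨_, _, b⟩ => h2 b
      simp only [h2, and_false, if_neg c2, if_neg c3, if_neg c4, if_false]
      norm_num
  · by_cases h2 : p = q
    · subst h2
      have hL : ∑ ω, μ₀ ω * (s ω i * s ω k * s ω p * s ω p) = 0 := by
        calc ∑ ω, μ₀ ω * (s ω i * s ω k * s ω p * s ω p)
            = ∑ ω, μ₀ ω * (s ω i * s ω k) := by
              refine Finset.sum_congr rfl fun ω _ => ?_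
              rw [show s ω i * s ω k * s ω p * s ω p
                  = (s ω i * s ω k) * (s ω p * s ω p) by ring, hsq, mul_one]
          _ = 0 := by rw [hpair i k, if_neg h1]
      rw [hL]
      have c2 : ¬(i = p ∧ k = p) := fun ⟨a, b⟩ => h1 (a.trans b.symm)
      have c3 : ¬(i = p ∧ k = p) := c2
      have c4 : ¬(i = k ∧ k = p ∧ p = p) := fun ⟨a, _⟩ => h1 a
      simp only [h1, false_and, if_neg c2, if_neg c3, if_neg c4, if_false]
      norm_num
    · by_cases h3 : i = p
      · subst h3
        by_cases h5 : k = q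
        · subst h5
          have hL : ∑ ω, μ₀ ω * (s ω i * s ω k * s ω i * s ω k) = 1 := by
            calc ∑ ω, μ₀ ω * (s ω i * s ω k * s ω i * s ω k) = ∑ ω, μ₀ ω := by
                  refine Finset.sum_congr rfl fun ω _ => ?_
                  rw [show s ω i * s ω k * s ω i * s ω k
                      = (s ω i * s ω i) * (s ω k * s ω k) by ring, hsq, hsq, mul_one, mul_one]
              _ = 1 := hμsum
          rw [hL]
          have h1' : ¬k = i := fun h => h1 h.symm
          norm_num [h1, h1']
        · have hL : ∑ ω, μ₀ ω * (s ω i * s ω k * s ω i * s ω q) = 0 := by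
            calc ∑ ω, μ₀ ω * (s ω i * s ω k * s ω i * s ω q)
                = ∑ ω, μ₀ ω * (s ω k * s ω q) := by
                  refine Finset.sum_congr rfl fun ω _ => ?_
                  rw [show s ω i * s ω k * s ω i * s ω q
                      = (s ω i * s ω i) * (s ω k * s ω q) by ring, hsq, one_mul]
              _ = 0 := by rw [hpair k q, if_neg h5]
          rw [hL]
          have h1' : ¬k = i := fun h => h1 h.symm
          norm_num [h1, h1', h5]
      · by_cases h5 : i = q
        · subst h5
          have hL : ∑ ω, μ₀ ω * (s ω i * s ω k * s ω p * s ω i)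
              = if k = p then 1 else 0 := by
            calc ∑ ω, μ₀ ω * (s ω i * s ω k * s ω p * s ω i)
                = ∑ ω, μ₀ ω * (s ω k * s ω p) := by
                  refine Finset.sum_congr rfl fun ω _ => ?_
                  rw [show s ω i * s ω k * s ω p * s ω i
                      = (s ω i * s ω i) * (s ω k * s ω p) by ring, hsq, one_mul]
              _ = _ := hpair k p
          rw [hL]
          by_cases h6 : k = p <;> norm_num [h1, h3, h6]
        · by_cases h6 : k = p
          · subst h6
            have hL : ∑ ω, μ₀ ω * (s ω i * s ω k * s ω k * s ω q) = 0 := by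
              calc ∑ ω, μ₀ ω * (s ω i * s ω k * s ω k * s ω q)
                  = ∑ ω, μ₀ ω * (s ω i * s ω q) := by
                    refine Finset.sum_congr rfl fun ω _ => ?_
                    rw [show s ω i * s ω k * s ω k * s ω q
                        = (s ω k * s ω k) * (s ω i * s ω q) by ring, hsq, one_mul]
                _ = 0 := by rw [hpair i q, if_neg h5]
            rw [hL]
            norm_num [h1, h5]
          · by_cases h7 : k = q
            · subst h7
              have hL : ∑ ω, μ₀ ω * (s ω i * s ω k * s ω p * s ω k) = 0 := by
                calc ∑ ω, μ₀ ω * (s ω i * s ω k * s ω p * s ω k)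
                    = ∑ ω, μ₀ ω * (s ω i * s ω p) := by
                      refine Finset.sum_congr rfl fun ω _ => ?_
                      rw [show s ω i * s ω k * s ω p * s ω k
                          = (s ω k * s ω k) * (s ω i * s ω p) by ring, hsq, one_mul]
                  _ = 0 := by rw [hpair i p, if_neg h3]
              rw [hL]
              norm_num [h1, h3]
            · rw [quad_moment μ₀ s hsign h4 h1 h3 h5 h6 h7 h2]
              norm_num [h1, h3, h5]

end M4

section Row
variable {Ω₀ : Type*} [Fintype Ω₀] (μ₀ : Ω₀ → ℝ) {n : ℕ} (s : Ω₀ → Fin n → ℝ)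

lemma row_E1 (hμsum : ∑ ω, μ₀ ω = 1)
    (hsign : ∀ ω i, s ω i = 1 ∨ s ω i = -1) (h4 : FourWiseIndepSigns μ₀ s)
    (f g : Fin n → ℝ) :
    ∑ a, μ₀ a * ((∑ i, s a i * f i) * (∑ i, s a i * g i)) = ∑ i, f i * g i := by
  have expand : ∀ a, μ₀ a * ((∑ i, s a i * f i) * (∑ i, s a i * g i))
      = ∑ i, ∑ k, f i * g k * (μ₀ a * (s a i * s a k)) := by
    intro a
    rw [Finset.sum_mul_sum, Finset.mul_sum]
    refine Finset.sum_congr rfl fun i _ => ?_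
    rw [Finset.mul_sum]
    exact Finset.sum_congr rfl fun k _ => by ring
  calc ∑ a, μ₀ a * ((∑ i, s a i * f i) * (∑ i, s a i * g i))
      = ∑ a, ∑ i, ∑ k, f i * g k * (μ₀ a * (s a i * s a k)) :=
        Finset.sum_congr rfl fun a _ => expand a
    _ = ∑ i, ∑ k, f i * g k * ∑ a, μ₀ a * (s a i * s a k) := by
        rw [Finset.sum_comm]
        refine Finset.sum_congr rfl fun i _ => ?_
        rw [Finset.sum_comm]
        refine Finset.sum_congr rfl fun k _ => ?_
        rw [← Finset.mul_sum]
    _ = ∑ i, ∑ k, f i * g k * (if i = k then 1 else 0) :=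
        Finset.sum_congr rfl fun i _ => Finset.sum_congr rfl fun k _ => by
          rw [pair_moment μ₀ s hμsum hsign h4 i k]
    _ = ∑ i, f i * g i := by
        refine Finset.sum_congr rfl fun i _ => ?_
        simp [mul_ite, Finset.sum_ite_eq]

lemma row_E2 (hμsum : ∑ ω, μ₀ ω = 1)
    (hsign : ∀ ω i, s ω i = 1 ∨ s ω i = -1) (h4 : FourWiseIndepSigns μ₀ s)
    (f g : Fin n → ℝ) :
    ∑ a, μ₀ a * ((∑ i, s a i * f i) * (∑ i, s a i * g i)) ^ 2
      = 2 * (∑ i, f i * g i) ^ 2 + (∑ i, f i ^ 2) * (∑ i, g i ^ 2)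
        - 2 * ∑ i, (f i * g i) ^ 2 := by
  have expand : ∀ a, μ₀ a * ((∑ i, s a i * f i) * (∑ i, s a i * g i)) ^ 2
      = ∑ i, ∑ p, ∑ k, ∑ q,
          f i * g k * f p * g q * (μ₀ a * (s a i * s a k * s a p * s a q)) := by
    intro a
    have e1 : (∑ i, s a i * f i) * (∑ i, s a i * g i)
        = ∑ i, ∑ k, (s a i * f i) * (s a k * g k) := Finset.sum_mul_sum _ _ _ _
    rw [sq, e1, Finset.sum_mul_sum, Finset.mul_sum]
    refine Finset.sum_congr rfl fun i _ => ?_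
    rw [Finset.mul_sum]
    refine Finset.sum_congr rfl fun p _ => ?_
    rw [Finset.sum_mul_sum, Finset.mul_sum]
    refine Finset.sum_congr rfl fun k _ => ?_
    rw [Finset.mul_sum]
    refine Finset.sum_congr rfl fun q _ => ?_
    ring
  have hM4 := M4_eq μ₀ s hμsum hsign h4
  calc ∑ a, μ₀ a * ((∑ i, s a i * f i) * (∑ i, s a i * g i)) ^ 2
      = ∑ a, ∑ i, ∑ p, ∑ k, ∑ q,
          f i * g k * f p * g q * (μ₀ a * (s a i * s a k * s a p * s a q)) :=
        Finset.sum_congr rfl fun a _ => expand a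
    _ = ∑ i, ∑ p, ∑ k, ∑ q,
          f i * g k * f p * g q * ∑ a, μ₀ a * (s a i * s a k * s a p * s a q) := by
        rw [Finset.sum_comm]
        refine Finset.sum_congr rfl fun i _ => ?_
        rw [Finset.sum_comm]
        refine Finset.sum_congr rfl fun p _ => ?_
        rw [Finset.sum_comm]
        refine Finset.sum_congr rfl fun k _ => ?_
        rw [Finset.sum_comm]
        refine Finset.sum_congr rfl fun q _ => ?_
        rw [← Finset.mul_sum]
    _ = ∑ i, ∑ p, ∑ k, ∑ q, f i * g k * f p * g q *
          ((if i = k ∧ p = q then 1 else 0) + (if i = p ∧ k = q then 1 else 0)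
            + (if i = q ∧ k = p then 1 else 0)
            - 2 * (if i = k ∧ k = p ∧ p = q then (1:ℝ) else 0)) := by
        refine Finset.sum_congr rfl fun i _ => Finset.sum_congr rfl fun p _ =>
          Finset.sum_congr rfl fun k _ => Finset.sum_congr rfl fun q _ => ?_
        rw [hM4 i k p q]
    _ = 2 * (∑ i, f i * g i) ^ 2 + (∑ i, f i ^ 2) * (∑ i, g i ^ 2)
        - 2 * ∑ i, (f i * g i) ^ 2 := by
        have S1 : ∑ i, ∑ p, ∑ k, ∑ q, f i * g k * f p * g q *
            (if i = k ∧ p = q then (1:ℝ) else 0) = (∑ i, f i * g i) ^ 2 := by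
          simp [ite_and, mul_ite, Finset.sum_ite_eq, sq, Finset.sum_mul_sum]
          exact Finset.sum_congr rfl fun i _ => Finset.sum_congr rfl fun p _ => by ring
        have S2 : ∑ i, ∑ p, ∑ k, ∑ q, f i * g k * f p * g q *
            (if i = p ∧ k = q then (1:ℝ) else 0) = (∑ i, f i ^ 2) * (∑ i, g i ^ 2) := by
          simp [ite_and, mul_ite, Finset.sum_ite_eq, sq, Finset.sum_mul_sum]
          exact Finset.sum_congr rfl fun i _ => Finset.sum_congr rfl fun p _ => by ring
        have S3 : ∑ i, ∑ p, ∑ k, ∑ q, f i * g k * f p * g q *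
            (if i = q ∧ k = p then (1:ℝ) else 0) = (∑ i, f i * g i) ^ 2 := by
          simp [ite_and, mul_ite, Finset.sum_ite_eq, sq, Finset.sum_mul_sum]
          exact Finset.sum_congr rfl fun i _ => Finset.sum_congr rfl fun p _ => by ring
        have S4 : ∑ i, ∑ p, ∑ k, ∑ q, f i * g k * f p * g q *
            (if i = k ∧ k = p ∧ p = q then (1:ℝ) else 0) = ∑ i, (f i * g i) ^ 2 := by
          simp [ite_and, mul_ite, Finset.sum_ite_eq, sq, Finset.sum_mul_sum]
          exact Finset.sum_congr rfl fun i _ => by ring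
        have pt : ∀ (X y1 y2 y3 y4 : ℝ), X * (y1 + y2 + y3 - 2 * y4)
            = X * y1 + X * y2 + X * y3 - 2 * (X * y4) := by intros; ring
        simp only [pt, Finset.sum_add_distrib, Finset.sum_sub_distrib, ← Finset.mul_sum]
        rw [S1, S2, S3, S4]
        ring

lemma row_var_le (hμsum : ∑ ω, μ₀ ω = 1)
    (hsign : ∀ ω i, s ω i = 1 ∨ s ω i = -1) (h4 : FourWiseIndepSigns μ₀ s)
    (f g : Fin n → ℝ) :
    (∑ a, μ₀ a * ((∑ i, s a i * f i) * (∑ i, s a i * g i)) ^ 2)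
      - (∑ a, μ₀ a * ((∑ i, s a i * f i) * (∑ i, s a i * g i))) ^ 2
      ≤ 2 * ((∑ i, f i ^ 2) * (∑ i, g i ^ 2)) := by
  rw [row_E1 μ₀ s hμsum hsign h4 f g, row_E2 μ₀ s hμsum hsign h4 f g]
  have hcs : (∑ i, f i * g i) ^ 2 ≤ (∑ i, f i ^ 2) * (∑ i, g i ^ 2) :=
    Finset.sum_mul_sq_le_sq_mul_sq Finset.univ f g
  have hnn : (0:ℝ) ≤ ∑ i, (f i * g i) ^ 2 :=
    Finset.sum_nonneg fun i _ => sq_nonneg _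
  nlinarith

end Row

section ProdSpace
variable {Ω₀ : Type*} [Fintype Ω₀] (μ₀ : Ω₀ → ℝ)

lemma prod_one_point {m : ℕ} (hμsum : ∑ a, μ₀ a = 1) (X : Ω₀ → ℝ) (j₀ : Fin m) :
    ∑ ω : Fin m → Ω₀, (∏ j, μ₀ (ω j)) * X (ω j₀) = ∑ a, μ₀ a * X a := by
  have hpt : ∀ ω : Fin m → Ω₀, (∏ j, μ₀ (ω j)) * X (ω j₀)
      = ∏ j, (μ₀ (ω j) * (if j₀ = j then X (ω j) else 1)) := by
    intro ω
    rw [Finset.prod_mul_distrib, Finset.prod_ite_eq]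
    simp
  calc ∑ ω : Fin m → Ω₀, (∏ j, μ₀ (ω j)) * X (ω j₀)
      = ∑ ω : Fin m → Ω₀, ∏ j, (μ₀ (ω j) * (if j₀ = j then X (ω j) else 1)) :=
        Finset.sum_congr rfl fun ω _ => hpt ω
    _ = ∏ j, ∑ a, μ₀ a * (if j₀ = j then X a else 1) :=
        sum_pi_prod (fun j a => μ₀ a * (if j₀ = j then X a else 1))
    _ = ∑ a, μ₀ a * X a := by
        have hfac : ∀ j : Fin m, (∑ a, μ₀ a * (if j₀ = j then X a else 1))
            = if j₀ = j then (∑ a, μ₀ a * X a) else 1 := by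
          intro j; by_cases h : j₀ = j <;> simp [h, hμsum]
        rw [Finset.prod_congr rfl fun j _ => hfac j, Finset.prod_ite_eq]
        simp

lemma prod_two_point {m : ℕ} (hμsum : ∑ a, μ₀ a = 1) (X : Ω₀ → ℝ) {j₀ j₁ : Fin m}
    (hne : j₀ ≠ j₁) :
    ∑ ω : Fin m → Ω₀, (∏ j, μ₀ (ω j)) * (X (ω j₀) * X (ω j₁))
      = (∑ a, μ₀ a * X a) * (∑ a, μ₀ a * X a) := by
  have hpt : ∀ ω : Fin m → Ω₀, (∏ j, μ₀ (ω j)) * (X (ω j₀) * X (ω j₁))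
      = ∏ j, (μ₀ (ω j) * ((if j₀ = j then X (ω j) else 1)
          * (if j₁ = j then X (ω j) else 1))) := by
    intro ω
    rw [Finset.prod_mul_distrib, Finset.prod_mul_distrib,
      Finset.prod_ite_eq, Finset.prod_ite_eq]
    simp
  calc ∑ ω : Fin m → Ω₀, (∏ j, μ₀ (ω j)) * (X (ω j₀) * X (ω j₁))
      = ∑ ω : Fin m → Ω₀, ∏ j, (μ₀ (ω j) * ((if j₀ = j then X (ω j) else 1)
          * (if j₁ = j then X (ω j) else 1))) :=
        Finset.sum_congr rfl fun ω _ => hpt ω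
    _ = ∏ j, ∑ a, μ₀ a * ((if j₀ = j then X a else 1) * (if j₁ = j then X a else 1)) :=
        sum_pi_prod (fun j a => μ₀ a * ((if j₀ = j then X a else 1) * (if j₁ = j then X a else 1)))
    _ = ∏ j, ((if j₀ = j then (∑ a, μ₀ a * X a) else 1)
          * (if j₁ = j then (∑ a, μ₀ a * X a) else 1)) := by
        refine Finset.prod_congr rfl fun j _ => ?_
        by_cases h0 : j₀ = j
        · have h1 : ¬ j₁ = j := fun h => hne (h0.trans h.symm)
          simp [h0, h1]
        · by_cases h1 : j₁ = j <;> simp [h0, h1, hμsum]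
    _ = (∑ a, μ₀ a * X a) * (∑ a, μ₀ a * X a) := by
        rw [Finset.prod_mul_distrib, Finset.prod_ite_eq, Finset.prod_ite_eq]
        simp

end ProdSpace

/-- The AMS estimator `(1/m)⟨Πf, Πg⟩` on the i.i.d. product space of `m` rows. -/
noncomputable def amsEst {Ω₀ : Type*} {n m : ℕ} (s : Ω₀ → Fin n → ℝ)
    (f g : Fin n → ℝ) (ω : Fin m → Ω₀) : ℝ :=
  (1 / (m : ℝ)) * ∑ j, (∑ i, s (ω j) i * f i) * (∑ i, s (ω j) i * g i)

/-- Variance bound for the AMS sketch estimator: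
`Var((1/m)⟨Πf,Πg⟩) ≤ (2/m)‖f‖₂²‖g‖₂²`. -/
theorem stmt3 {Ω₀ : Type*} [Fintype Ω₀] (μ₀ : Ω₀ → ℝ)
    (hμ : ∀ ω, 0 ≤ μ₀ ω) (hμsum : ∑ ω, μ₀ ω = 1)
    {n m : ℕ} (hm : 0 < m) (s : Ω₀ → Fin n → ℝ)
    (hsign : ∀ ω i, s ω i = 1 ∨ s ω i = -1)
    (h4 : FourWiseIndepSigns μ₀ s)
    (f g : Fin n → ℝ) :
    (∑ ω : Fin m → Ω₀, (∏ j, μ₀ (ω j)) * (amsEst s f g ω) ^ 2)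
      - (∑ ω : Fin m → Ω₀, (∏ j, μ₀ (ω j)) * amsEst s f g ω) ^ 2
      ≤ (2 / (m : ℝ)) * (∑ i, (f i) ^ 2) * (∑ i, (g i) ^ 2) := by
  classical
  have hm0 : (0:ℝ) < (m:ℝ) := by exact_mod_cast hm
  set X : Ω₀ → ℝ := fun a => (∑ i, s a i * f i) * (∑ i, s a i * g i) with hX
  set E1 : ℝ := ∑ a, μ₀ a * X a with hE1
  set E2 : ℝ := ∑ a, μ₀ a * (X a) ^ 2 with hE2
  -- first moment
  have hA : ∑ ω : Fin m → Ω₀, (∏ j, μ₀ (ω j)) * amsEst s f g ω = E1 := by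
    have hpt : ∀ ω : Fin m → Ω₀, (∏ j, μ₀ (ω j)) * amsEst s f g ω
        = (1/(m:ℝ)) * ∑ j, (∏ j', μ₀ (ω j')) * X (ω j) := by
      intro ω
      calc (∏ j, μ₀ (ω j)) * amsEst s f g ω
          = (1/(m:ℝ)) * ((∏ j', μ₀ (ω j')) * ∑ j, X (ω j)) := by
            rw [amsEst]; ring
        _ = (1/(m:ℝ)) * ∑ j, (∏ j', μ₀ (ω j')) * X (ω j) := by rw [Finset.mul_sum]
    calc ∑ ω : Fin m → Ω₀, (∏ j, μ₀ (ω j)) * amsEst s f g ω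
        = ∑ ω : Fin m → Ω₀, (1/(m:ℝ)) * ∑ j, (∏ j', μ₀ (ω j')) * X (ω j) :=
          Finset.sum_congr rfl fun ω _ => hpt ω
      _ = (1/(m:ℝ)) * ∑ j : Fin m, ∑ ω : Fin m → Ω₀, (∏ j', μ₀ (ω j')) * X (ω j) := by
          rw [← Finset.mul_sum, Finset.sum_comm]
      _ = (1/(m:ℝ)) * ∑ _j : Fin m, E1 := by
          rw [Finset.sum_congr rfl fun j _ => prod_one_point μ₀ hμsum X j]
      _ = E1 := by
          rw [Finset.sum_const, Finset.card_univ, Fintype.card_fin, nsmul_eq_mul]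
          field_simp
  -- second moment
  have hB : ∑ ω : Fin m → Ω₀, (∏ j, μ₀ (ω j)) * (amsEst s f g ω) ^ 2
      = (1/(m:ℝ))^2 * ((m:ℝ) * E2 + ((m:ℝ)^2 - (m:ℝ)) * E1^2) := by
    have hpt : ∀ ω : Fin m → Ω₀, (∏ j, μ₀ (ω j)) * (amsEst s f g ω) ^ 2
        = (1/(m:ℝ))^2 * ∑ j₀ : Fin m, ∑ j₁ : Fin m,
            (∏ j', μ₀ (ω j')) * (X (ω j₀) * X (ω j₁)) := by
      intro ω
      have hexp : (∑ j, X (ω j)) * (∑ j, X (ω j))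
          = ∑ j₀ : Fin m, ∑ j₁ : Fin m, X (ω j₀) * X (ω j₁) :=
        Finset.sum_mul_sum _ _ _ _
      calc (∏ j, μ₀ (ω j)) * (amsEst s f g ω) ^ 2
          = (1/(m:ℝ))^2 * ((∏ j', μ₀ (ω j'))
              * ((∑ j, X (ω j)) * (∑ j, X (ω j)))) := by
            rw [amsEst]; ring
        _ = (1/(m:ℝ))^2 * ((∏ j', μ₀ (ω j'))
              * ∑ j₀ : Fin m, ∑ j₁ : Fin m, X (ω j₀) * X (ω j₁)) := by rw [hexp]
        _ = (1/(m:ℝ))^2 * ∑ j₀ : Fin m, ∑ j₁ : Fin m,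
              (∏ j', μ₀ (ω j')) * (X (ω j₀) * X (ω j₁)) := by
            rw [Finset.mul_sum]
            congr 1
            refine Finset.sum_congr rfl fun j₀ _ => ?_
            rw [Finset.mul_sum]
    have hswap : ∑ ω : Fin m → Ω₀, (∏ j, μ₀ (ω j)) * (amsEst s f g ω) ^ 2
        = (1/(m:ℝ))^2 * ∑ j₀ : Fin m, ∑ j₁ : Fin m,
            ∑ ω : Fin m → Ω₀, (∏ j', μ₀ (ω j')) * (X (ω j₀) * X (ω j₁)) := by
      rw [Finset.sum_congr rfl fun ω _ => hpt ω, ← Finset.mul_sum]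
      congr 1
      rw [Finset.sum_comm]
      refine Finset.sum_congr rfl fun j₀ _ => ?_
      rw [Finset.sum_comm]
    rw [hswap]
    have hinner : ∀ j₀ j₁ : Fin m,
        ∑ ω : Fin m → Ω₀, (∏ j', μ₀ (ω j')) * (X (ω j₀) * X (ω j₁))
          = if j₀ = j₁ then E2 else E1^2 := by
      intro j₀ j₁
      by_cases h : j₀ = j₁
      · subst h
        rw [if_pos rfl]
        have := prod_one_point μ₀ hμsum (fun a => X a * X a) j₀
        calc ∑ ω : Fin m → Ω₀, (∏ j', μ₀ (ω j')) * (X (ω j₀) * X (ω j₀))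
            = ∑ a, μ₀ a * (X a * X a) := this
          _ = E2 := by rw [hE2]; exact Finset.sum_congr rfl fun a _ => by rw [sq]
      · rw [if_neg h, sq]
        exact prod_two_point μ₀ hμsum X h
    rw [Finset.sum_congr rfl fun j₀ _ => Finset.sum_congr rfl fun j₁ _ => hinner j₀ j₁]
    have hcount : ∑ j₀ : Fin m, ∑ j₁ : Fin m, (if j₀ = j₁ then E2 else E1^2)
        = (m:ℝ) * E2 + ((m:ℝ)^2 - (m:ℝ)) * E1^2 := by
      have hrow : ∀ j₀ : Fin m, ∑ j₁ : Fin m, (if j₀ = j₁ then E2 else E1^2)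
          = E2 + ((m:ℝ) - 1) * E1^2 := by
        intro j₀
        calc ∑ j₁ : Fin m, (if j₀ = j₁ then E2 else E1^2)
            = ∑ j₁ : Fin m, (E1^2 + if j₀ = j₁ then E2 - E1^2 else 0) :=
              Finset.sum_congr rfl fun j₁ _ => by split_ifs <;> ring
          _ = (m:ℝ) * E1^2 + (E2 - E1^2) := by
              rw [Finset.sum_add_distrib, Finset.sum_const, Finset.sum_ite_eq]
              simp [Finset.card_univ, nsmul_eq_mul]
          _ = E2 + ((m:ℝ) - 1) * E1^2 := by ring
      rw [Finset.sum_congr rfl fun j₀ _ => hrow j₀, Finset.sum_const, Finset.card_univ,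
        Fintype.card_fin, nsmul_eq_mul]
      ring
    rw [hcount]
  rw [hA, hB]
  have hvar : E2 - E1^2 ≤ 2 * ((∑ i, f i ^ 2) * (∑ i, g i ^ 2)) := by
    rw [hE1, hE2, hX]
    exact row_var_le μ₀ s hμsum hsign h4 f g
  have hkey : (1/(m:ℝ))^2 * ((m:ℝ) * E2 + ((m:ℝ)^2 - (m:ℝ)) * E1^2) - E1^2
      = (1/(m:ℝ)) * (E2 - E1^2) := by
    field_simp
    ring
  rw [hkey]
  have hle : (1/(m:ℝ)) * (E2 - E1^2) ≤ (1/(m:ℝ)) * (2 * ((∑ i, f i ^ 2) * (∑ i, g i ^ 2))) :=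
    mul_le_mul_of_nonneg_left hvar (by positivity)
  calc (1/(m:ℝ)) * (E2 - E1^2)
      ≤ (1/(m:ℝ)) * (2 * ((∑ i, f i ^ 2) * (∑ i, g i ^ 2))) := hle
    _ = (2 / (m : ℝ)) * (∑ i, (f i) ^ 2) * (∑ i, (g i) ^ 2) := by ring
end

section
/- Let f, g ∈ ℝ^n and let Π ∈ ℝ^{m×n} be defined by Π_{j,i} = s(i)·𝟙(h(i) = j), with s : [n] → {-1,+1} drawn from a 4-wise independent family and h : [n] → [m] drawn independently from a 2-wise independent family. Then Var(⟨Πf, Πg⟩) ≤ (2/m)·‖f‖₂²·‖g‖₂². -/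
open Finset BigOperators
open scoped Classical

/-- A uniformly random bin function from a 2-wise independent family. -/
def TwoWiseIndepBins {Ω : Type*} [Fintype Ω] {n m : ℕ} (μ : Ω → ℝ)
    (h : Ω → Fin n → Fin m) : Prop :=
  ∀ (k : ℕ), k ≤ 2 → ∀ (x : Fin k → Fin n), Function.Injective x →
    ∀ v : Fin k → Fin m,
      (∑ ω, (if ∀ j, h ω (x j) = v j then μ ω else 0)) = (1 / (m : ℝ)) ^ k

/-- The Count sketch inner-product estimator `⟨Πf, Πg⟩`. -/
noncomputable def countEst {Ωs Ωh : Type*} {n m : ℕ}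
    (s : Ωs → Fin n → ℝ) (h : Ωh → Fin n → Fin m)
    (f g : Fin n → ℝ) (ωs : Ωs) (ωh : Ωh) : ℝ :=
  ∑ j, (∑ i, (if h ωh i = j then f i * s ωs i else 0)) *
       (∑ i, (if h ωh i = j then g i * s ωs i else 0))

lemma cs_sum_bool_prod (k : ℕ) (hk : 0 < k) :
    ∑ b : Fin k → Bool, ∏ j, (if b j then (1:ℝ) else -1) = 0 := by
  have h1 : (∏ j : Fin k, ∑ c : Bool, (if c then (1:ℝ) else -1))
      = ∑ b ∈ Fintype.piFinset (fun _ : Fin k => (Finset.univ : Finset Bool)),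
          ∏ j, (if b j then (1:ℝ) else -1) :=
    Finset.prod_univ_sum _ _
  rw [Fintype.piFinset_univ] at h1
  rw [← h1]
  apply Finset.prod_eq_zero (Finset.mem_univ (⟨0, hk⟩ : Fin k))
  simp

lemma cs_EsGen {Ω : Type*} [Fintype Ω] {n : ℕ} (μs : Ω → ℝ) (s : Ω → Fin n → ℝ)
    (hsign : ∀ ω i, s ω i = 1 ∨ s ω i = -1)
    (h4 : ∀ (k : ℕ), k ≤ 4 → ∀ (x : Fin k → Fin n), Function.Injective x →
      ∀ ε : Fin k → ℝ, (∀ j, ε j = 1 ∨ ε j = -1) →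
        (∑ ω, (if ∀ j, s ω (x j) = ε j then μs ω else 0)) = (1/2 : ℝ) ^ k)
    (k : ℕ) (hk : k ≤ 4) (hk0 : 0 < k) (x : Fin k → Fin n) (hx : Function.Injective x) :
    ∑ ω, μs ω * ∏ j, s ω (x j) = 0 := by
  have step : ∀ ω, μs ω * ∏ j, s ω (x j)
      = ∑ b : Fin k → Bool, (∏ j, (if b j then (1:ℝ) else -1)) *
          (if ∀ j, s ω (x j) = (if b j then (1:ℝ) else -1) then μs ω else 0) := by
    intro ω
    set b0 : Fin k → Bool := fun j => decide (s ω (x j) = 1) with hb0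
    have hall : ∀ j, s ω (x j) = (if b0 j then (1:ℝ) else -1) := by
      intro j
      by_cases hj : s ω (x j) = 1
      · simp [hb0, hj]
      · rcases hsign ω (x j) with h | h
        · exact absurd h hj
        · rw [h]; norm_num [hb0, hj]
    rw [Finset.sum_eq_single b0]
    · rw [if_pos hall]
      have : (∏ j, (if b0 j then (1:ℝ) else -1)) = ∏ j, s ω (x j) :=
        Finset.prod_congr rfl fun j _ => (hall j).symm
      rw [this, mul_comm]
    · intro b _ hb
      rw [if_neg, mul_zero]
      intro hcon
      apply hb
      funext j
      have hj := hcon j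
      by_cases hbj : b j
      · simp only [hbj, if_true] at hj
        simp [hb0, hbj, hj]
      · simp only [hbj, if_false] at hj
        have : ¬ (s ω (x j) = 1) := by rw [hj]; norm_num
        simp [hb0, hbj, this]
    · intro hb; exact absurd (Finset.mem_univ b0) hb
  rw [Finset.sum_congr rfl fun ω _ => step ω, Finset.sum_comm]
  have : ∀ b : Fin k → Bool,
      (∑ ω, (∏ j, (if b j then (1:ℝ) else -1)) *
        (if ∀ j, s ω (x j) = (if b j then (1:ℝ) else -1) then μs ω else 0))
      = (∏ j, (if b j then (1:ℝ) else -1)) * (1/2 : ℝ)^k := by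
    intro b
    rw [← Finset.mul_sum, h4 k hk x hx _ (fun j => by by_cases hb : b j <;> simp [hb])]
  rw [Finset.sum_congr rfl fun b _ => this b, ← Finset.sum_mul, cs_sum_bool_prod k hk0, zero_mul]

lemma cs_Es2 {Ω : Type*} [Fintype Ω] {n : ℕ} (μs : Ω → ℝ) (s : Ω → Fin n → ℝ)
    (EsGen : ∀ (k : ℕ), k ≤ 4 → 0 < k → ∀ (x : Fin k → Fin n), Function.Injective x →
      ∑ ω, μs ω * ∏ j, s ω (x j) = 0)
    {a b : Fin n} (hab : a ≠ b) :
    ∑ ω, μs ω * (s ω a * s ω b) = 0 := by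
  have hinj : Function.Injective ![a, b] := by
    intro x y hxy
    fin_cases x <;> fin_cases y <;> simp_all
  have := EsGen 2 (by norm_num) (by norm_num) ![a, b] hinj
  simpa [Fin.prod_univ_two] using this

lemma cs_Es4 {Ω : Type*} [Fintype Ω] {n : ℕ} (μs : Ω → ℝ) (s : Ω → Fin n → ℝ)
    (EsGen : ∀ (k : ℕ), k ≤ 4 → 0 < k → ∀ (x : Fin k → Fin n), Function.Injective x →
      ∑ ω, μs ω * ∏ j, s ω (x j) = 0)
    {a b c d : Fin n} (hab : a ≠ b) (hac : a ≠ c) (had : a ≠ d)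
    (hbc : b ≠ c) (hbd : b ≠ d) (hcd : c ≠ d) :
    ∑ ω, μs ω * (s ω a * s ω b * (s ω c * s ω d)) = 0 := by
  have hinj : Function.Injective ![a, b, c, d] := by
    intro x y hxy
    fin_cases x <;> fin_cases y <;> simp_all
  have key := EsGen 4 (by norm_num) (by norm_num) ![a, b, c, d] hinj
  rw [← key]
  refine Finset.sum_congr rfl fun ω _ => ?_
  rw [Fin.prod_univ_four]
  simp only [Matrix.cons_val_zero, Matrix.cons_val_one, Matrix.head_cons,
    Matrix.cons_val_two, Matrix.tail_cons, Matrix.cons_val_three]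
  ring

lemma cs_Eh2 {Ω : Type*} [Fintype Ω] {n m : ℕ} (hm : 0 < m) (μh : Ω → ℝ)
    (h : Ω → Fin n → Fin m)
    (h2 : ∀ (k : ℕ), k ≤ 2 → ∀ (x : Fin k → Fin n), Function.Injective x →
      ∀ v : Fin k → Fin m,
        (∑ ω, (if ∀ j, h ω (x j) = v j then μh ω else 0)) = (1 / (m : ℝ)) ^ k)
    {a b : Fin n} (hab : a ≠ b) :
    ∑ ω, (if h ω a = h ω b then μh ω else 0) = 1 / (m : ℝ) := by
  have hinj : Function.Injective ![a, b] := by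
    intro x y hxy
    fin_cases x <;> fin_cases y <;> simp_all
  have step : ∀ ω, (if h ω a = h ω b then μh ω else 0)
      = ∑ v : Fin m, (if ∀ j, h ω (![a,b] j) = (![v,v] : Fin 2 → Fin m) j then μh ω else 0) := by
    intro ω
    have hiff : ∀ v : Fin m, (∀ j, h ω (![a,b] j) = (![v,v] : Fin 2 → Fin m) j)
        ↔ (h ω a = v ∧ h ω b = v) := by
      intro v
      rw [Fin.forall_fin_two]
      simp
    by_cases hc : h ω a = h ω b
    · rw [if_pos hc, Finset.sum_congr rfl fun v _ => by rw [if_congr (hiff v) rfl rfl]]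
      have : ∀ v : Fin m, (if h ω a = v ∧ h ω b = v then μh ω else 0)
          = if h ω a = v then μh ω else 0 := by
        intro v
        by_cases hv : h ω a = v <;> simp [hv, ← hc]
      rw [Finset.sum_congr rfl fun v _ => this v, Finset.sum_ite_eq]
      simp
    · rw [if_neg hc]
      symm
      apply Finset.sum_eq_zero
      intro v _
      rw [if_congr (hiff v) rfl rfl, if_neg]
      rintro ⟨h1, h2⟩
      exact hc (h1.trans h2.symm)
  rw [Finset.sum_congr rfl fun ω _ => step ω, Finset.sum_comm]
  rw [Finset.sum_congr rfl fun v _ => h2 2 (by norm_num) ![a,b] hinj ![v,v]]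
  have hm' : (m : ℝ) ≠ 0 := Nat.cast_ne_zero.mpr hm.ne'
  simp
  field_simp

lemma cs_swap4 {A B C D : Type*} [Fintype A] [Fintype B] [Fintype C] [Fintype D]
    (F : A → B → C → D → ℝ) :
    ∑ a, ∑ b, ∑ c, ∑ d, F a b c d = ∑ c, ∑ d, ∑ a, ∑ b, F a b c d := by
  calc ∑ a, ∑ b, ∑ c, ∑ d, F a b c d
      = ∑ a, ∑ c, ∑ b, ∑ d, F a b c d :=
        Finset.sum_congr rfl fun a _ => Finset.sum_comm
    _ = ∑ c, ∑ a, ∑ b, ∑ d, F a b c d := Finset.sum_comm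
    _ = ∑ c, ∑ a, ∑ d, ∑ b, F a b c d :=
        Finset.sum_congr rfl fun c _ => Finset.sum_congr rfl fun a _ => Finset.sum_comm
    _ = ∑ c, ∑ d, ∑ a, ∑ b, F a b c d :=
        Finset.sum_congr rfl fun c _ => Finset.sum_comm

/-- Off-diagonal term in the expansion of the Count sketch estimator. -/
noncomputable def csTerm {Ωs Ωh : Type*} {n m : ℕ}
    (s : Ωs → Fin n → ℝ) (h : Ωh → Fin n → Fin m) (f g : Fin n → ℝ)
    (i i' : Fin n) (ωs : Ωs) (ωh : Ωh) : ℝ :=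
  if i = i' then 0
  else f i * g i' * (s ωs i * s ωs i') * (if h ωh i = h ωh i' then 1 else 0)

lemma cs_factor {Ωs Ωh : Type*} [Fintype Ωs] [Fintype Ωh]
    (μs : Ωs → ℝ) (μh : Ωh → ℝ) (F : Ωs → ℝ) (G : Ωh → ℝ) :
    (∑ ωs, ∑ ωh, μs ωs * μh ωh * (F ωs * G ωh))
      = (∑ ωs, μs ωs * F ωs) * (∑ ωh, μh ωh * G ωh) := by
  rw [Finset.sum_mul_sum]
  exact Finset.sum_congr rfl fun a _ => Finset.sum_congr rfl fun b _ => by ring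

lemma cs_hT {Ωs Ωh : Type*} {n m : ℕ}
    (s : Ωs → Fin n → ℝ) (h : Ωh → Fin n → Fin m)
    (hsign : ∀ ω i, s ω i = 1 ∨ s ω i = -1) (f g : Fin n → ℝ) :
    ∀ ωs ωh, countEst s h f g ωs ωh
      = (∑ i, f i * g i) + ∑ i, ∑ i', csTerm s h f g i i' ωs ωh := by
  intro ωs ωh
  unfold countEst
  calc ∑ j, (∑ i, (if h ωh i = j then f i * s ωs i else 0)) *
       (∑ i, (if h ωh i = j then g i * s ωs i else 0))
      = ∑ j, ∑ i, ∑ i', (if h ωh i = j then f i * s ωs i else 0) *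
          (if h ωh i' = j then g i' * s ωs i' else 0) :=
        Finset.sum_congr rfl fun j _ => Finset.sum_mul_sum _ _ _ _
    _ = ∑ i, ∑ i', ∑ j, (if h ωh i = j then f i * s ωs i else 0) *
          (if h ωh i' = j then g i' * s ωs i' else 0) := by
        rw [Finset.sum_comm]
        exact Finset.sum_congr rfl fun i _ => Finset.sum_comm
    _ = ∑ i, ∑ i', (if h ωh i' = h ωh i then (f i * s ωs i) * (g i' * s ωs i') else 0) := by
        refine Finset.sum_congr rfl fun i _ => Finset.sum_congr rfl fun i' _ => ?_
        have hpt : ∀ j, (if h ωh i = j then f i * s ωs i else 0) *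
            (if h ωh i' = j then g i' * s ωs i' else 0)
            = if h ωh i = j then
                (if h ωh i' = j then (f i * s ωs i) * (g i' * s ωs i') else 0) else 0 := by
          intro j; by_cases h1 : h ωh i = j <;> simp [h1]
        rw [Finset.sum_congr rfl fun j _ => hpt j, Finset.sum_ite_eq]
        simp
    _ = ∑ i, ∑ i', ((if i = i' then f i * g i else 0) + csTerm s h f g i i' ωs ωh) := by
        refine Finset.sum_congr rfl fun i _ => Finset.sum_congr rfl fun i' _ => ?_
        by_cases hii : i = i'
        · subst hii
          rcases hsign ωs i with hs | hs <;> simp [csTerm, hs]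
        · by_cases hc : h ωh i' = h ωh i
          · have hc' := hc.symm
            simp only [csTerm, if_pos hc, if_neg hii, if_pos hc', zero_add]
            ring
          · have hc' : ¬ (h ωh i = h ωh i') := fun e => hc e.symm
            simp [csTerm, hii, hc, hc']
    _ = (∑ i, f i * g i) + ∑ i, ∑ i', csTerm s h f g i i' ωs ωh := by
        simp only [Finset.sum_add_distrib]
        congr 1
        refine Finset.sum_congr rfl fun i _ => ?_
        rw [Finset.sum_ite_eq]
        simp

lemma cs_E2 {Ωs Ωh : Type*} [Fintype Ωs] [Fintype Ωh]
    (μs : Ωs → ℝ) (μh : Ωh → ℝ) (hμs1 : ∑ ω, μs ω = 1)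
    {n m : ℕ}
    (s : Ωs → Fin n → ℝ) (h : Ωh → Fin n → Fin m)
    (hsign : ∀ ω i, s ω i = 1 ∨ s ω i = -1)
    (es2 : ∀ {a b : Fin n}, a ≠ b → ∑ ω, μs ω * (s ω a * s ω b) = 0)
    (es4 : ∀ {a b c d : Fin n}, a ≠ b → a ≠ c → a ≠ d → b ≠ c → b ≠ d → c ≠ d →
      ∑ ω, μs ω * (s ω a * s ω b * (s ω c * s ω d)) = 0)
    (eh2 : ∀ {a b : Fin n}, a ≠ b → ∑ ω, (if h ω a = h ω b then μh ω else 0) = 1 / (m : ℝ))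
    (f g : Fin n → ℝ) {i i' : Fin n} (hii : i ≠ i') (k k' : Fin n) :
    (∑ ωs, ∑ ωh, μs ωs * μh ωh * (csTerm s h f g i i' ωs ωh * csTerm s h f g k k' ωs ωh))
      = (if k = i ∧ k' = i' then (f i * g i')^2 * (1/(m:ℝ)) else 0)
        + (if k = i' ∧ k' = i then (f i * g i') * (f i' * g i) * (1/(m:ℝ)) else 0) := by
  by_cases hkk : k = k'
  · have c1 : ¬(k = i ∧ k' = i') := by rintro ⟨rfl, rfl⟩; exact hii hkk
    have c2 : ¬(k = i' ∧ k' = i) := by rintro ⟨rfl, rfl⟩; exact hii hkk.symm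
    rw [if_neg c1, if_neg c2, add_zero]
    apply Finset.sum_eq_zero; intro a _
    apply Finset.sum_eq_zero; intro b _
    simp [csTerm, hkk]
  · have expand : ∀ a b, μs a * μh b *
        (csTerm s h f g i i' a b * csTerm s h f g k k' a b)
        = μs a * μh b *
          ((fun ω => (f i * g i' * (f k * g k')) * (s ω i * s ω i' * (s ω k * s ω k'))) a *
           (fun ω => (if h ω i = h ω i' then (1:ℝ) else 0) *
             (if h ω k = h ω k' then (1:ℝ) else 0)) b) := by
      intro a b
      simp only [csTerm, if_neg hii, if_neg hkk]
      ring
    rw [Finset.sum_congr rfl fun a _ => Finset.sum_congr rfl fun b _ => expand a b,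
      cs_factor]
    have pullc : (∑ ω, μs ω * ((f i * g i' * (f k * g k'))
          * (s ω i * s ω i' * (s ω k * s ω k'))))
        = (f i * g i' * (f k * g k')) * ∑ ω, μs ω * (s ω i * s ω i' * (s ω k * s ω k')) := by
      rw [Finset.mul_sum]
      exact Finset.sum_congr rfl fun ω _ => by ring
    rw [pullc]
    by_cases case1 : k = i ∧ k' = i'
    · obtain ⟨rfl, rfl⟩ := case1
      have c2 : ¬(k = k' ∧ k' = k) := fun hc => hii hc.1
      rw [if_pos ⟨rfl, rfl⟩, if_neg c2, add_zero]
      have hsig : (∑ ω, μs ω * (s ω k * s ω k' * (s ω k * s ω k'))) = 1 := by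
        rw [← hμs1]
        refine Finset.sum_congr rfl fun ω _ => ?_
        rcases hsign ω k with hs | hs <;> rcases hsign ω k' with hs' | hs' <;>
          rw [hs, hs'] <;> ring
      have hbin : (∑ ωh, μh ωh * ((if h ωh k = h ωh k' then (1:ℝ) else 0) *
          (if h ωh k = h ωh k' then (1:ℝ) else 0))) = 1/(m:ℝ) := by
        rw [← eh2 hii]
        refine Finset.sum_congr rfl fun ω _ => ?_
        by_cases hc : h ω k = h ω k' <;> simp [hc]
      rw [hsig, hbin]
      ring
    · by_cases case2 : k = i' ∧ k' = i
      · obtain ⟨rfl, rfl⟩ := case2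
        rw [if_neg case1, if_pos ⟨rfl, rfl⟩, zero_add]
        have hsig : (∑ ω, μs ω * (s ω k' * s ω k * (s ω k * s ω k'))) = 1 := by
          rw [← hμs1]
          refine Finset.sum_congr rfl fun ω _ => ?_
          rcases hsign ω k with hs | hs <;> rcases hsign ω k' with hs' | hs' <;>
            rw [hs, hs'] <;> ring
        have hbin : (∑ ωh, μh ωh * ((if h ωh k' = h ωh k then (1:ℝ) else 0) *
            (if h ωh k = h ωh k' then (1:ℝ) else 0))) = 1/(m:ℝ) := by
          rw [← eh2 hkk]
          refine Finset.sum_congr rfl fun ω _ => ?_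
          by_cases hc : h ω k = h ω k'
          · simp [hc]
          · have hc' : ¬ (h ω k' = h ω k) := fun e => hc e.symm
            simp [hc, hc']
        rw [hsig, hbin]
        ring
      · rw [if_neg case1, if_neg case2, add_zero]
        have hsig : (∑ ω, μs ω * (s ω i * s ω i' * (s ω k * s ω k'))) = 0 := by
          by_cases h1 : k = i
          · subst h1
            have hki' : k' ≠ i' := fun hh => case1 ⟨rfl, hh⟩
            have : ∀ ω, μs ω * (s ω k * s ω i' * (s ω k * s ω k'))
                = μs ω * (s ω i' * s ω k') := by
              intro ω; rcases hsign ω k with hs | hs <;> rw [hs] <;> ring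
            rw [Finset.sum_congr rfl fun ω _ => this ω]
            exact es2 fun e => hki' e.symm
          · by_cases h2 : k = i'
            · subst h2
              have hik' : i ≠ k' := by
                rintro rfl; exact case2 ⟨rfl, rfl⟩
              have : ∀ ω, μs ω * (s ω i * s ω k * (s ω k * s ω k'))
                  = μs ω * (s ω i * s ω k') := by
                intro ω; rcases hsign ω k with hs | hs <;> rw [hs] <;> ring
              rw [Finset.sum_congr rfl fun ω _ => this ω]
              exact es2 hik'
            · by_cases h3 : k' = i
              · subst h3
                have : ∀ ω, μs ω * (s ω k' * s ω i' * (s ω k * s ω k'))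
                    = μs ω * (s ω i' * s ω k) := by
                  intro ω; rcases hsign ω k' with hs | hs <;> rw [hs] <;> ring
                rw [Finset.sum_congr rfl fun ω _ => this ω]
                exact es2 fun e => h2 e.symm
              · by_cases h4 : k' = i'
                · subst h4
                  have : ∀ ω, μs ω * (s ω i * s ω k' * (s ω k * s ω k'))
                      = μs ω * (s ω i * s ω k) := by
                    intro ω; rcases hsign ω k' with hs | hs <;> rw [hs] <;> ring
                  rw [Finset.sum_congr rfl fun ω _ => this ω]
                  exact es2 fun e => h1 e.symm
                · exact es4 hii (fun e => h1 e.symm) (fun e => h3 e.symm)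
                    (fun e => h2 e.symm) (fun e => h4 e.symm) hkk
        rw [hsig]
        ring

lemma cs_collapse {n : ℕ} (v : ℝ) (a b : Fin n) :
    (∑ k : Fin n, ∑ k' : Fin n, if k = a ∧ k' = b then v else 0) = v := by
  simp [ite_and, Finset.sum_ite_eq']

/-- Variance bound for the Count sketch inner-product estimator:
`Var(⟨Πf,Πg⟩) ≤ (2/m)‖f‖₂²‖g‖₂²`, over the random choice of `s` and `h`. -/
theorem stmt5 {Ωs Ωh : Type*} [Fintype Ωs] [Fintype Ωh]
    (μs : Ωs → ℝ) (μh : Ωh → ℝ)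
    (hμs : ∀ ω, 0 ≤ μs ω) (hμh : ∀ ω, 0 ≤ μh ω)
    (hμs1 : ∑ ω, μs ω = 1) (hμh1 : ∑ ω, μh ω = 1)
    {n m : ℕ} (hm : 0 < m)
    (s : Ωs → Fin n → ℝ) (h : Ωh → Fin n → Fin m)
    (hsign : ∀ ω i, s ω i = 1 ∨ s ω i = -1)
    (h4 : FourWiseIndepSigns μs s)
    (h2 : TwoWiseIndepBins μh h)
    (f g : Fin n → ℝ) :
    (∑ ωs, ∑ ωh, μs ωs * μh ωh * (countEst s h f g ωs ωh) ^ 2)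
      - (∑ ωs, ∑ ωh, μs ωs * μh ωh * countEst s h f g ωs ωh) ^ 2
      ≤ (2 / (m : ℝ)) * (∑ i, (f i) ^ 2) * (∑ i, (g i) ^ 2) := by
  have esgen := cs_EsGen μs s hsign h4
  have es2 : ∀ {a b : Fin n}, a ≠ b → ∑ ω, μs ω * (s ω a * s ω b) = 0 :=
    fun hab => cs_Es2 μs s esgen hab
  have es4 : ∀ {a b c d : Fin n}, a ≠ b → a ≠ c → a ≠ d → b ≠ c → b ≠ d → c ≠ d →
      ∑ ω, μs ω * (s ω a * s ω b * (s ω c * s ω d)) = 0 :=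
    fun hab hac had hbc hbd hcd => cs_Es4 μs s esgen hab hac had hbc hbd hcd
  have eh2 : ∀ {a b : Fin n}, a ≠ b →
      ∑ ω, (if h ω a = h ω b then μh ω else 0) = 1 / (m : ℝ) :=
    fun hab => cs_Eh2 hm μh h h2 hab
  have hT := cs_hT s h hsign f g
  -- expectation of a constant
  have hconst : ∀ c : ℝ, (∑ ωs, ∑ ωh, μs ωs * μh ωh * c) = c := by
    intro c
    have h1 : ∀ a, (∑ ωh, μs a * μh ωh * c) = μs a * c := by
      intro a
      calc ∑ ωh, μs a * μh ωh * c = (∑ ωh, μh ωh) * (μs a * c) := by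
            rw [Finset.sum_mul]
            exact Finset.sum_congr rfl fun b _ => by ring
        _ = μs a * c := by rw [hμh1, one_mul]
    rw [Finset.sum_congr rfl fun a _ => h1 a, ← Finset.sum_mul, hμs1, one_mul]
  -- each off-diagonal term has zero expectation
  have hEterm0 : ∀ i i' : Fin n,
      (∑ ωs, ∑ ωh, μs ωs * μh ωh * csTerm s h f g i i' ωs ωh) = 0 := by
    intro i i'
    by_cases hii : i = i'
    · apply Finset.sum_eq_zero; intro a _
      apply Finset.sum_eq_zero; intro b _
      simp [csTerm, hii]
    · have expand : ∀ a b, μs a * μh b * csTerm s h f g i i' a b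
          = μs a * μh b * ((fun ω => (f i * g i') * (s ω i * s ω i')) a *
              (fun ω => (if h ω i = h ω i' then (1:ℝ) else 0)) b) := by
        intro a b
        simp only [csTerm, if_neg hii]
        try ring
      rw [Finset.sum_congr rfl fun a _ => Finset.sum_congr rfl fun b _ => expand a b,
        cs_factor]
      have h0 : (∑ ω, μs ω * ((f i * g i') * (s ω i * s ω i'))) = 0 := by
        have : (∑ ω, μs ω * ((f i * g i') * (s ω i * s ω i')))
            = (f i * g i') * ∑ ω, μs ω * (s ω i * s ω i') := by
          rw [Finset.mul_sum]
          exact Finset.sum_congr rfl fun ω _ => by ring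
        rw [this, es2 hii, mul_zero]
      rw [h0, zero_mul]
  -- expectation of Y vanishes
  have hEY : (∑ ωs, ∑ ωh, μs ωs * μh ωh * (∑ i, ∑ i', csTerm s h f g i i' ωs ωh)) = 0 := by
    have expand : ∀ a b, μs a * μh b * (∑ i, ∑ i', csTerm s h f g i i' a b)
        = ∑ i, ∑ i', μs a * μh b * csTerm s h f g i i' a b := by
      intro a b
      rw [Finset.mul_sum]
      exact Finset.sum_congr rfl fun i _ => Finset.mul_sum _ _ _
    rw [Finset.sum_congr rfl fun a _ => Finset.sum_congr rfl fun b _ => expand a b,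
      cs_swap4]
    exact Finset.sum_eq_zero fun i _ => Finset.sum_eq_zero fun i' _ => hEterm0 i i'
  -- first moment
  have hET : (∑ ωs, ∑ ωh, μs ωs * μh ωh * countEst s h f g ωs ωh) = ∑ i, f i * g i := by
    have expand : ∀ a b, μs a * μh b * countEst s h f g a b
        = μs a * μh b * (∑ i, f i * g i)
          + μs a * μh b * (∑ i, ∑ i', csTerm s h f g i i' a b) := by
      intro a b; rw [hT a b]; ring
    rw [Finset.sum_congr rfl fun a _ => Finset.sum_congr rfl fun b _ => expand a b]
    simp only [Finset.sum_add_distrib]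
    rw [hconst, hEY, add_zero]
  -- second moment of the off-diagonal part, for fixed (i,i')
  have hEinner : ∀ i i' : Fin n, i ≠ i' →
      (∑ ωs, ∑ ωh, μs ωs * μh ωh * (csTerm s h f g i i' ωs ωh *
          (∑ k, ∑ k', csTerm s h f g k k' ωs ωh)))
        = (f i * g i')^2 * (1/(m:ℝ)) + (f i * g i') * (f i' * g i) * (1/(m:ℝ)) := by
    intro i i' hii
    have expand : ∀ a b, μs a * μh b * (csTerm s h f g i i' a b *
          (∑ k, ∑ k', csTerm s h f g k k' a b))
        = ∑ k, ∑ k', μs a * μh b *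
            (csTerm s h f g i i' a b * csTerm s h f g k k' a b) := by
      intro a b
      rw [Finset.mul_sum, Finset.mul_sum]
      all_goals refine Finset.sum_congr rfl fun k _ => ?_
      all_goals rw [Finset.mul_sum, Finset.mul_sum]
      all_goals exact Finset.sum_congr rfl fun k' _ => by ring
    rw [Finset.sum_congr rfl fun a _ => Finset.sum_congr rfl fun b _ => expand a b,
      cs_swap4]
    rw [Finset.sum_congr rfl fun k _ => Finset.sum_congr rfl fun k' _ =>
      cs_E2 μs μh hμs1 s h hsign (fun hab => es2 hab)
        (fun hab hac had hbc hbd hcd => es4 hab hac had hbc hbd hcd)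
        (fun hab => eh2 hab) f g hii k k']
    simp only [Finset.sum_add_distrib]
    rw [cs_collapse, cs_collapse]
  -- second moment of Y
  have hEY2 : (∑ ωs, ∑ ωh, μs ωs * μh ωh *
        ((∑ i, ∑ i', csTerm s h f g i i' ωs ωh) * (∑ i, ∑ i', csTerm s h f g i i' ωs ωh)))
      = ∑ i, ∑ i', (if i = i' then 0
          else (f i * g i')^2 * (1/(m:ℝ)) + (f i * g i') * (f i' * g i) * (1/(m:ℝ))) := by
    have expand : ∀ a b, μs a * μh b *
          ((∑ i, ∑ i', csTerm s h f g i i' a b) * (∑ i, ∑ i', csTerm s h f g i i' a b))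
        = ∑ i, ∑ i', μs a * μh b * (csTerm s h f g i i' a b *
            (∑ k, ∑ k', csTerm s h f g k k' a b)) := by
      intro a b
      rw [Finset.sum_mul, Finset.mul_sum]
      all_goals refine Finset.sum_congr rfl fun i _ => ?_
      all_goals rw [Finset.sum_mul, Finset.mul_sum]
      all_goals exact Finset.sum_congr rfl fun i' _ => by ring
    rw [Finset.sum_congr rfl fun a _ => Finset.sum_congr rfl fun b _ => expand a b,
      cs_swap4]
    refine Finset.sum_congr rfl fun i _ => Finset.sum_congr rfl fun i' _ => ?_
    by_cases hii : i = i'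
    · rw [if_pos hii]
      apply Finset.sum_eq_zero; intro a _
      apply Finset.sum_eq_zero; intro b _
      simp [csTerm, hii]
    · rw [if_neg hii, hEinner i i' hii]
  -- second moment of the estimator
  have hET2 : (∑ ωs, ∑ ωh, μs ωs * μh ωh * (countEst s h f g ωs ωh) ^ 2)
      = (∑ i, f i * g i)^2 + ∑ ωs, ∑ ωh, μs ωs * μh ωh *
          ((∑ i, ∑ i', csTerm s h f g i i' ωs ωh) *
           (∑ i, ∑ i', csTerm s h f g i i' ωs ωh)) := by
    have expand : ∀ a b, μs a * μh b * (countEst s h f g a b) ^ 2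
        = μs a * μh b * ((∑ i, f i * g i)^2)
          + (2 * (∑ i, f i * g i)) * (μs a * μh b * (∑ i, ∑ i', csTerm s h f g i i' a b))
          + μs a * μh b * ((∑ i, ∑ i', csTerm s h f g i i' a b) *
              (∑ i, ∑ i', csTerm s h f g i i' a b)) := by
      intro a b; rw [hT a b]; ring
    rw [Finset.sum_congr rfl fun a _ => Finset.sum_congr rfl fun b _ => expand a b]
    simp only [Finset.sum_add_distrib]
    have hmid : (∑ ωs, ∑ ωh, (2 * (∑ i, f i * g i)) *
          (μs ωs * μh ωh * (∑ i, ∑ i', csTerm s h f g i i' ωs ωh)))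
        = 0 := by
      have pull2 : ∀ (c : ℝ) (F : Ωs → Ωh → ℝ),
          (∑ ωs, ∑ ωh, c * F ωs ωh) = c * ∑ ωs, ∑ ωh, F ωs ωh := by
        intro c F
        calc ∑ ωs, ∑ ωh, c * F ωs ωh
            = ∑ ωs, c * ∑ ωh, F ωs ωh :=
              Finset.sum_congr rfl fun a _ => (Finset.mul_sum _ _ _).symm
          _ = c * ∑ ωs, ∑ ωh, F ωs ωh := (Finset.mul_sum _ _ _).symm
      rw [pull2, hEY, mul_zero]
    rw [hconst, hmid, add_zero]
  -- put things together: the variance equals E[Y²]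
  rw [hET, hET2, hEY2]
  have hgoal : (∑ i, f i * g i) ^ 2
      + (∑ i, ∑ i', (if i = i' then 0
          else (f i * g i')^2 * (1/(m:ℝ)) + (f i * g i') * (f i' * g i) * (1/(m:ℝ))))
      - (∑ i, f i * g i) ^ 2
      = ∑ i, ∑ i', (if i = i' then 0
          else (f i * g i')^2 * (1/(m:ℝ)) + (f i * g i') * (f i' * g i) * (1/(m:ℝ))) := by
    ring
  rw [hgoal]
  -- split into the two sums
  have hsplit : ∀ i i' : Fin n, (if i = i' then (0:ℝ)
        else (f i * g i')^2 * (1/(m:ℝ)) + (f i * g i') * (f i' * g i) * (1/(m:ℝ)))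
      = (if i = i' then 0 else (f i * g i')^2 * (1/(m:ℝ)))
        + (if i = i' then 0 else (f i * g i) * (f i' * g i') * (1/(m:ℝ))) := by
    intro i i'
    by_cases hii : i = i'
    · simp [hii]
    · simp only [if_neg hii]
      ring
  rw [Finset.sum_congr rfl fun i _ => Finset.sum_congr rfl fun i' _ => hsplit i i']
  simp only [Finset.sum_add_distrib]
  -- bound the first sum
  have hSA : (∑ i, ∑ i', (if i = i' then (0:ℝ) else (f i * g i')^2 * (1/(m:ℝ))))
      ≤ (∑ i, f i ^ 2) * (∑ i, g i ^ 2) * (1/(m:ℝ)) := by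
    have step1 : (∑ i, ∑ i', (if i = i' then (0:ℝ) else (f i * g i')^2 * (1/(m:ℝ))))
        ≤ ∑ i, ∑ i', (f i * g i')^2 * (1/(m:ℝ)) := by
      refine Finset.sum_le_sum fun i _ => Finset.sum_le_sum fun i' _ => ?_
      by_cases hii : i = i'
      · rw [if_pos hii]; positivity
      · rw [if_neg hii]
    have step2 : (∑ i, ∑ i', (f i * g i')^2 * (1/(m:ℝ)))
        = (∑ i, f i ^ 2) * (∑ i, g i ^ 2) * (1/(m:ℝ)) := by
      have hrow : ∀ i, (∑ i', (f i * g i')^2 * (1/(m:ℝ)))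
          = f i ^ 2 * ((∑ i', g i' ^ 2) * (1/(m:ℝ))) := by
        intro i
        rw [Finset.sum_mul, Finset.mul_sum]
        exact Finset.sum_congr rfl fun i' _ => by ring
      rw [Finset.sum_congr rfl fun i _ => hrow i, ← Finset.sum_mul]
      ring
    linarith
  -- bound the second sum
  have hSB : (∑ i, ∑ i', (if i = i' then (0:ℝ) else (f i * g i) * (f i' * g i') * (1/(m:ℝ))))
      ≤ (∑ i, f i ^ 2) * (∑ i, g i ^ 2) * (1/(m:ℝ)) := by
    have hrow : ∀ i, (∑ i', (if i = i' then (0:ℝ) else (f i * g i) * (f i' * g i') * (1/(m:ℝ))))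
        = (∑ i', (f i * g i) * (f i' * g i') * (1/(m:ℝ)))
          - (f i * g i) * (f i * g i) * (1/(m:ℝ)) := by
      intro i
      have hpt : ∀ i', (if i = i' then (0:ℝ) else (f i * g i) * (f i' * g i') * (1/(m:ℝ)))
          = (f i * g i) * (f i' * g i') * (1/(m:ℝ))
            - (if i = i' then (f i * g i) * (f i' * g i') * (1/(m:ℝ)) else 0) := by
        intro i'; by_cases hii : i = i' <;> simp [hii]
      rw [Finset.sum_congr rfl fun i' _ => hpt i', Finset.sum_sub_distrib,
        Finset.sum_ite_eq]
      simp
    rw [Finset.sum_congr rfl fun i _ => hrow i, Finset.sum_sub_distrib]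
    have h1 : (∑ i, ∑ i', (f i * g i) * (f i' * g i') * (1/(m:ℝ)))
        = (∑ i, f i * g i)^2 * (1/(m:ℝ)) := by
      have hrow2 : ∀ i, (∑ i', (f i * g i) * (f i' * g i') * (1/(m:ℝ)))
          = (f i * g i) * ((∑ i', f i' * g i') * (1/(m:ℝ))) := by
        intro i
        rw [Finset.sum_mul, Finset.mul_sum]
        exact Finset.sum_congr rfl fun i' _ => by ring
      rw [Finset.sum_congr rfl fun i _ => hrow2 i, ← Finset.sum_mul]
      ring
    have h2' : (0:ℝ) ≤ ∑ i, (f i * g i) * (f i * g i) * (1/(m:ℝ)) :=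
      Finset.sum_nonneg fun i _ => mul_nonneg (mul_self_nonneg _) (by positivity)
    have h3 : (∑ i, f i * g i)^2 ≤ (∑ i, f i ^ 2) * (∑ i, g i ^ 2) :=
      Finset.sum_mul_sq_le_sq_mul_sq _ _ _
    have h4' : (∑ i, f i * g i)^2 * (1/(m:ℝ))
        ≤ (∑ i, f i ^ 2) * (∑ i, g i ^ 2) * (1/(m:ℝ)) :=
      mul_le_mul_of_nonneg_right h3 (by positivity)
    linarith
  calc (∑ i, ∑ i', (if i = i' then (0:ℝ) else (f i * g i')^2 * (1/(m:ℝ))))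
        + (∑ i, ∑ i', (if i = i' then (0:ℝ) else (f i * g i) * (f i' * g i') * (1/(m:ℝ))))
      ≤ (∑ i, f i ^ 2) * (∑ i, g i ^ 2) * (1/(m:ℝ))
        + (∑ i, f i ^ 2) * (∑ i, g i ^ 2) * (1/(m:ℝ)) := add_le_add hSA hSB
    _ = (2 / (m : ℝ)) * (∑ i, (f i) ^ 2) * (∑ i, (g i) ^ 2) := by ring
end
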